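/- Let p be a prime and let m ≥ 1, r be integers with 0 ≤ r ≤ m(p−1). Write r = a(p−1) + b with integers a ≥ 0 and 0 ≤ b ≤ p−2. Then there exists a nonzero reduced polynomial f ∈ 𝔽_p[x_1,…,x_m] of total degree exactly r such that p · #{v ∈ 𝔽_p^m : f(v) ≠ 0} = (p − b) · p^{m−a}. Consequently the minimum number of nonzero values of a nonzero reduced polynomial of total degree at most r is exactly d_RM(r,m) = (p−b)·p^{m−a−1}. -/

import Mathlib

open MvPolynomial

lemma SZaux.homogComp_ne_zero {σ R : Type*} [CommSemiring R]
    (φ : MvPolynomial σ R) (h : φ ≠ 0) :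
    homogeneousComponent φ.totalDegree φ ≠ 0 := by
  obtain ⟨d, hd, hdeg⟩ := Finset.exists_mem_eq_sup φ.support
    (by rwa [Finset.nonempty_iff_ne_empty, Ne, support_eq_empty])
    (fun s => s.sum fun _ e => e)
  intro hc
  have h2 : coeff d (homogeneousComponent φ.totalDegree φ) = coeff d φ := by
    rw [coeff_homogeneousComponent, if_pos]
    rw [totalDegree, hdeg]
    simp [Finsupp.degree, Finsupp.sum]
    rfl
  rw [hc, coeff_zero] at h2
  exact (mem_support_iff.mp hd) h2.symm

lemma SZaux.degree_add (a b : ℕ →₀ ℕ) : (a + b).degree = a.degree + b.degree := by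
  classical
  simp [Finsupp.degree_eq_weight_one, map_add]

lemma SZaux.totalDegree_mul_eq {σ : Type*} {R : Type*} [CommRing R] [IsDomain R]
    {f g : MvPolynomial σ R} (hf : f ≠ 0) (hg : g ≠ 0) :
    (f * g).totalDegree = f.totalDegree + g.totalDegree := by
  classical
  refine le_antisymm (totalDegree_mul f g) ?_
  set df := f.totalDegree with hdf
  set dg := g.totalDegree with hdg
  have hHf := SZaux.homogComp_ne_zero f hf
  have hHg := SZaux.homogComp_ne_zero g hg
  obtain ⟨d, hd⟩ := exists_coeff_ne_zero (mul_ne_zero hHf hHg)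
  have hdeg : d.degree = df + dg := by
    by_contra hne
    exact hd (((homogeneousComponent_isHomogeneous df f).mul
      (homogeneousComponent_isHomogeneous dg g)).coeff_eq_zero hne)
  have key : coeff d (f * g) = coeff d (homogeneousComponent df f * homogeneousComponent dg g) := by
    rw [coeff_mul, coeff_mul]
    refine Finset.sum_congr rfl fun x hx => ?_
    rw [Finset.HasAntidiagonal.mem_antidiagonal] at hx
    have hsum : x.1.degree + x.2.degree = df + dg := by
      rw [← hdeg, ← hx]
      simp [Finsupp.degree_eq_weight_one, map_add]
    by_cases h1 : x.1.degree = df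
    · have h2 : x.2.degree = dg := by omega
      rw [coeff_homogeneousComponent, coeff_homogeneousComponent, if_pos h1, if_pos h2]
    · rcases lt_or_gt_of_ne h1 with hlt | hgt
      · have h2 : dg < x.2.degree := by omega
        have : coeff x.2 g = 0 := coeff_eq_zero_of_totalDegree_lt (by
          exact h2)
        rw [this, coeff_homogeneousComponent (n := dg), if_neg (by omega), mul_zero, mul_zero]
      · have : coeff x.1 f = 0 := coeff_eq_zero_of_totalDegree_lt (by
          exact hgt)
        rw [this, coeff_homogeneousComponent (n := df), if_neg (by omega), zero_mul, zero_mul]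
  have hmem : d ∈ (f * g).support := mem_support_iff.mpr (by rw [key]; exact hd)
  have := le_totalDegree hmem
  calc df + dg = d.degree := hdeg.symm
    _ = d.sum fun _ e => e := by simp [Finsupp.degree, Finsupp.sum]; rfl
    _ ≤ (f * g).totalDegree := this

open MvPolynomial Finset

lemma SZaux.count_univar (p : ℕ) [Fact p.Prime] (q : Polynomial (ZMod p)) (hq : q ≠ 0) :
    p - q.natDegree ≤ (Finset.univ.filter fun y : ZMod p => q.eval y ≠ 0).card := by
  classical
  have hcard : (Finset.univ.filter fun y : ZMod p => q.eval y ≠ 0).card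
      + (Finset.univ.filter fun y : ZMod p => ¬ q.eval y ≠ 0).card = p := by
    rw [Finset.card_filter_add_card_filter_not]
    simp [ZMod.card]
  have hzero : (Finset.univ.filter fun y : ZMod p => ¬ q.eval y ≠ 0).card ≤ q.natDegree := by
    have hsub : (Finset.univ.filter fun y : ZMod p => ¬ q.eval y ≠ 0) ⊆ q.roots.toFinset := by
      intro y hy
      simp only [Finset.mem_filter, not_not] at hy
      simp [Multiset.mem_toFinset, Polynomial.mem_roots, hq, Polynomial.IsRoot, hy.2]
    calc (Finset.univ.filter fun y : ZMod p => ¬ q.eval y ≠ 0).card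
        ≤ q.roots.toFinset.card := Finset.card_le_card hsub
      _ ≤ Multiset.card q.roots := q.roots.toFinset_card_le
      _ ≤ q.natDegree := q.card_roots'
  omega

lemma SZaux.count_cons (p m : ℕ) [NeZero p] (P : (Fin (m+1) → ZMod p) → Prop) [DecidablePred P] :
    (Finset.univ.filter P).card
      = ∑ x : Fin m → ZMod p,
          (Finset.univ.filter fun y : ZMod p => P (Fin.cons y x)).card := by
  classical
  rw [Finset.card_eq_sum_card_fiberwise
    (f := fun v : Fin (m+1) → ZMod p => Fin.tail v) (t := Finset.univ)
    (fun x _ => Finset.mem_univ _)]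
  refine Finset.sum_congr rfl fun x _ => ?_
  refine Finset.card_bij (fun v _ => v 0) ?_ ?_ ?_
  · intro v hv
    simp only [Finset.mem_filter, Finset.mem_univ, true_and] at hv ⊢
    have h : Fin.cons (v 0) x = v := by
      rw [← hv.2, Fin.cons_self_tail]
    rw [h]
    exact hv.1
  · intro v hv w hw h
    simp only [Finset.mem_filter, Finset.mem_univ, true_and] at hv hw
    funext i
    refine Fin.cases ?_ ?_ i
    · exact h
    · intro j
      have := congrFun (hv.2.trans hw.2.symm) j
      simpa [Fin.tail] using this
  · intro y hy
    simp only [Finset.mem_filter, Finset.mem_univ, true_and] at hy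
    exact ⟨Fin.cons y x, by simp [Finset.mem_filter, hy, Fin.tail_cons], by simp⟩

lemma SZaux.eval_ne_zero_of_isEmpty {R : Type*} [CommSemiring R]
    (f : MvPolynomial (Fin 0) R) (hf : f ≠ 0) (v : Fin 0 → R) :
    MvPolynomial.eval v f ≠ 0 := by
  have hC : f = MvPolynomial.C (MvPolynomial.coeff 0 f) := by
    ext d
    have hd : d = 0 := Finsupp.ext fun i => i.elim0
    subst hd
    simp
  have hne : MvPolynomial.coeff 0 f ≠ 0 := by
    intro hc
    apply hf
    rw [hC, hc, map_zero]
  rw [hC]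
  simpa using hne

lemma SZaux.totalDegree_le_of_red {m k : ℕ} {R : Type*} [CommSemiring R]
    (g : MvPolynomial (Fin m) R) (h : ∀ i, g.degreeOf i ≤ k) :
    g.totalDegree ≤ m * k := by
  rw [MvPolynomial.totalDegree]
  apply Finset.sup_le
  intro d hd
  have hle : ∀ i, d i ≤ k := by
    intro i
    calc d i ≤ g.degreeOf i := by
          rw [MvPolynomial.degreeOf_eq_sup]
          exact Finset.le_sup (f := fun d => d i) hd
      _ ≤ k := h i
  calc (d.sum fun _ e => e) = ∑ i ∈ d.support, d i := rfl
    _ ≤ ∑ i : Fin m, d i := Finset.sum_le_sum_of_subset (Finset.subset_univ _)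
    _ ≤ ∑ _i : Fin m, k := Finset.sum_le_sum fun i _ => hle i
    _ = m * k := by simp [mul_comm]

set_option maxHeartbeats 2000000 in
lemma SZaux.key (p : ℕ) [Fact p.Prime] :
    ∀ m r a b : ℕ, ∀ f : MvPolynomial (Fin m) (ZMod p), r ≤ m * (p - 1) →
      r = a * (p - 1) + b → b ≤ p - 2 → f ≠ 0 → (∀ i, f.degreeOf i ≤ p - 1) →
      f.totalDegree ≤ r →
      (p - b) * p ^ (m - a)
        ≤ p * (Finset.univ.filter fun v : Fin m → ZMod p => eval v f ≠ 0).card := by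
  have hp2 : 2 ≤ p := (Fact.out : p.Prime).two_le
  have hP1 : 1 ≤ p - 1 := by omega
  intro m
  induction m with
  | zero =>
    intro r a b f hr hab hb hf hred hdeg
    have hb0 : b = 0 := by omega
    have ha0 : a = 0 := by
      have hz : a * (p - 1) = 0 := by omega
      rcases Nat.mul_eq_zero.mp hz with h | h
      · exact h
      · omega
    subst hb0; subst ha0
    have hone : 1 ≤ (Finset.univ.filter
        fun v : Fin 0 → ZMod p => eval v f ≠ 0).card := by
      rw [Nat.one_le_iff_ne_zero, Ne, Finset.card_eq_zero, ← Ne,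
        ← Finset.nonempty_iff_ne_empty]
      exact ⟨fun i => i.elim0, by
        simp only [Finset.mem_filter, Finset.mem_univ, true_and]
        exact SZaux.eval_ne_zero_of_isEmpty f hf _⟩
    simpa using Nat.mul_le_mul_left p hone
  | succ m ih =>
    intro r a b f hr hab hb hf hred hdeg
    classical
    set q := finSuccEquiv (ZMod p) m f with hq
    have hqne : q ≠ 0 := by
      rw [hq, Ne, map_eq_zero_iff _ (AlgEquiv.injective _)]
      exact hf
    set t := q.natDegree with ht
    set g := q.coeff t with hg
    have hgne : g ≠ 0 := by
      rw [hg, ht]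
      exact Polynomial.leadingCoeff_ne_zero.mpr hqne
    have ht0 : t = f.degreeOf 0 := by rw [ht, hq, natDegree_finSuccEquiv]
    have htle : t ≤ p - 1 := ht0 ▸ hred 0
    have htr : t ≤ r := le_trans (ht0 ▸ degreeOf_le_totalDegree f 0) hdeg
    have hgdeg : g.totalDegree + t ≤ r :=
      le_trans (totalDegree_coeff_finSuccEquiv_add_le f t hgne) hdeg
    have hgred : ∀ i, g.degreeOf i ≤ p - 1 := fun i =>
      le_trans (degreeOf_coeff_finSuccEquiv f i t) (hred i.succ)
    -- counting step
    have hcount : ∀ x : Fin m → ZMod p, eval x g ≠ 0 →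
        p - t ≤ (Finset.univ.filter
          fun y : ZMod p => eval (Fin.cons y x) f ≠ 0).card := by
      intro x hx
      have heq : ∀ y : ZMod p, eval (Fin.cons y x) f
          = Polynomial.eval y (q.map (eval x)) := fun y =>
        eval_eq_eval_mv_eval' x y f
      have hmapne : q.map (eval x) ≠ 0 := by
        intro hc
        apply hx
        have := congrArg (fun r => Polynomial.coeff r t) hc
        simpa [Polynomial.coeff_map, ← hg] using this
      have hndeg : (q.map (eval x)).natDegree ≤ t :=
        Polynomial.natDegree_map_le
      calc p - t ≤ p - (q.map (eval x)).natDegree := by omega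
        _ ≤ (Finset.univ.filter
              fun y : ZMod p => (q.map (eval x)).eval y ≠ 0).card :=
            SZaux.count_univar p _ hmapne
        _ = (Finset.univ.filter
              fun y : ZMod p => eval (Fin.cons y x) f ≠ 0).card := by
            apply congrArg
            apply Finset.filter_congr
            intro y _
            simp [heq y]
    have hsum : (Finset.univ.filter
          fun v : Fin (m+1) → ZMod p => eval v f ≠ 0).card
        = ∑ x : Fin m → ZMod p, (Finset.univ.filter
            fun y : ZMod p => eval (Fin.cons y x) f ≠ 0).card :=
      SZaux.count_cons p m _
    have hmain : (p - t) * (Finset.univ.filter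
          fun x : Fin m → ZMod p => eval x g ≠ 0).card
        ≤ (Finset.univ.filter
            fun v : Fin (m+1) → ZMod p => eval v f ≠ 0).card := by
      rw [hsum]
      calc (p - t) * (Finset.univ.filter
            fun x : Fin m → ZMod p => eval x g ≠ 0).card
          = ∑ _x ∈ (Finset.univ.filter
              fun x : Fin m → ZMod p => eval x g ≠ 0), (p - t) := by
            rw [Finset.sum_const, smul_eq_mul, mul_comm]
        _ ≤ ∑ x ∈ (Finset.univ.filter
              fun x : Fin m → ZMod p => eval x g ≠ 0),
              (Finset.univ.filter
                fun y : ZMod p => eval (Fin.cons y x) f ≠ 0).card :=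
            Finset.sum_le_sum fun x hx =>
              hcount x (Finset.mem_filter.mp hx).2
        _ ≤ ∑ x : Fin m → ZMod p, (Finset.univ.filter
              fun y : ZMod p => eval (Fin.cons y x) f ≠ 0).card :=
            Finset.sum_le_sum_of_subset (Finset.filter_subset _ _)
    set Ng := (Finset.univ.filter
      fun x : Fin m → ZMod p => eval x g ≠ 0).card with hNg
    -- apply induction hypothesis, case analysis
    have hfinal : (p - b) * p ^ (m + 1 - a) ≤ (p - t) * (p * Ng) := by
      by_cases hcase : r - t ≤ m * (p - 1)
      · -- Case I
        by_cases htb : t ≤ b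
        · -- Case I.a
          have hab' : r - t = a * (p - 1) + (b - t) := by omega
          have ham : a ≤ m := by
            have h1 : a * (p - 1) ≤ m * (p - 1) := by omega
            exact Nat.le_of_mul_le_mul_right h1 (by omega)
          have hIH := ih (r - t) a (b - t) g hcase hab' (by omega) hgne hgred
            (by omega)
          have hexp : m + 1 - a = (m - a) + 1 := by omega
          rw [hexp, pow_succ]
          calc (p - b) * (p ^ (m - a) * p)
              = ((p - b) * p) * p ^ (m - a) := by ring
            _ ≤ ((p - t) * (p - (b - t))) * p ^ (m - a) := by
                apply Nat.mul_le_mul_right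
                obtain ⟨u, hu⟩ : ∃ u, p = u + b := ⟨p - b, by omega⟩
                obtain ⟨s, hs⟩ : ∃ s, b = s + t := ⟨b - t, by omega⟩
                have e1 : p - b = u := by omega
                have e2 : p - (b - t) = u + t := by omega
                have e3 : p - t = u + s := by omega
                rw [e1, e2, e3, hu, hs]
                nlinarith [Nat.zero_le s, Nat.zero_le t, Nat.zero_le u]
            _ = (p - t) * ((p - (b - t)) * p ^ (m - a)) := by ring
            _ ≤ (p - t) * (p * Ng) := Nat.mul_le_mul_left _ hIH
        · -- Case I.b
          push_neg at htb
          have ha1 : 1 ≤ a := by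
            rcases Nat.eq_zero_or_pos a with h0 | h1
            · exfalso; subst h0; simp only [zero_mul, zero_add] at hab; omega
            · exact h1
          have hsplit : a * (p - 1) = (a - 1) * (p - 1) + (p - 1) := by
            obtain ⟨a', rfl⟩ : ∃ a', a = a' + 1 := ⟨a - 1, by omega⟩
            simp [add_mul]
          have hab' : r - t = (a - 1) * (p - 1) + (p - 1 + b - t) := by omega
          have hb' : p - 1 + b - t ≤ p - 2 := by omega
          have hIH := ih (r - t) (a - 1) (p - 1 + b - t) g hcase hab' hb'
            hgne hgred (by omega)
          have hexp : m - (a - 1) = m + 1 - a := by omega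
          rw [hexp] at hIH
          calc (p - b) * p ^ (m + 1 - a)
              ≤ ((p - t) * (p - (p - 1 + b - t))) * p ^ (m + 1 - a) := by
                apply Nat.mul_le_mul_right
                obtain ⟨sv, hsv⟩ : ∃ s, t = b + s + 1 := ⟨t - b - 1, by omega⟩
                obtain ⟨w, hw⟩ : ∃ w, p = t + 1 + w := ⟨p - t - 1, by omega⟩
                have e1 : p - b = sv + w + 2 := by omega
                have e2 : p - t = w + 1 := by omega
                have e3 : p - (p - 1 + b - t) = sv + 2 := by omega
                rw [e1, e2, e3]
                nlinarith [Nat.zero_le sv, Nat.zero_le w]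
            _ = (p - t) * ((p - (p - 1 + b - t)) * p ^ (m + 1 - a)) := by ring
            _ ≤ (p - t) * (p * Ng) := Nat.mul_le_mul_left _ hIH
      · -- Case II
        push_neg at hcase
        have hgdeg' : g.totalDegree ≤ m * (p - 1) :=
          SZaux.totalDegree_le_of_red g hgred
        have hIH := ih (m * (p - 1)) m 0 g le_rfl (by ring) (by omega)
          hgne hgred hgdeg'
        simp only [Nat.sub_self, pow_zero, mul_one, Nat.sub_zero] at hIH
        -- a = m with b > t, or a = m + 1 with b = 0
        have ham1 : a ≤ m + 1 := by
          by_contra hc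
          push_neg at hc
          have h1 : (m + 2) * (p - 1) ≤ a * (p - 1) :=
            Nat.mul_le_mul_right _ (by omega)
          have h2 : (m + 2) * (p - 1) = (m + 1) * (p - 1) + (p - 1) := by ring
          omega
        have key2 : (p - b) * p ^ (m + 1 - a) ≤ (p - t) * p := by
          rcases Nat.lt_or_ge a (m + 1) with hlt | hge
          · -- a ≤ m; show a = m and t < b
            have ham : a ≤ m := by omega
            have h1 : a * (p - 1) ≤ m * (p - 1) := Nat.mul_le_mul_right _ ham
            have htb : t < b := by omega
            have haeq : a = m := by
              by_contra hc
              have h3 : (a + 1) * (p - 1) ≤ m * (p - 1) :=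
                Nat.mul_le_mul_right _ (by omega)
              have h4 : (a + 1) * (p - 1) = a * (p - 1) + (p - 1) := by ring
              omega
            subst haeq
            simp only [Nat.add_sub_cancel_left, pow_one]
            exact Nat.mul_le_mul_right _ (by omega)
          · have haeq : a = m + 1 := by omega
            subst haeq
            have hbeq : b = 0 := by omega
            subst hbeq
            simp only [Nat.sub_self, pow_zero, mul_one, Nat.sub_zero]
            calc p = 1 * p := (one_mul p).symm
              _ ≤ (p - t) * p := Nat.mul_le_mul_right _ (by omega)
        calc (p - b) * p ^ (m + 1 - a) ≤ (p - t) * p := key2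
          _ = (p - t) * (p * 1) := by ring
          _ ≤ (p - t) * (p * Ng) := by
              apply Nat.mul_le_mul_left
              apply Nat.mul_le_mul_left
              exact Nat.le_of_mul_le_mul_left
                (show p * 1 ≤ p * Ng by simpa using hIH) (by omega)
    calc (p - b) * p ^ (m + 1 - a) ≤ (p - t) * (p * Ng) := hfinal
      _ = p * ((p - t) * Ng) := by ring
      _ ≤ p * (Finset.univ.filter
            fun v : Fin (m+1) → ZMod p => eval v f ≠ 0).card :=
          Nat.mul_le_mul_left p hmain

lemma SZaux.totalDegree_prod_eq {σ R ι : Type*} [CommRing R] [IsDomain R]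
    (s : Finset ι) (F : ι → MvPolynomial σ R) (h : ∀ i ∈ s, F i ≠ 0) :
    (∏ i ∈ s, F i) ≠ 0 ∧
      (∏ i ∈ s, F i).totalDegree = ∑ i ∈ s, (F i).totalDegree := by
  classical
  induction s using Finset.cons_induction with
  | empty => simp
  | cons i s his ih =>
    obtain ⟨hne, hdeg⟩ := ih fun j hj => h j (Finset.mem_cons.mpr (Or.inr hj))
    have hFi : F i ≠ 0 := h i (Finset.mem_cons_self i s)
    rw [Finset.prod_cons, Finset.sum_cons]
    exact ⟨mul_ne_zero hFi hne, by rw [SZaux.totalDegree_mul_eq hFi hne, hdeg]⟩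

set_option maxHeartbeats 2000000 in
lemma SZaux.exists_tight (p m a b : ℕ) [Fact p.Prime] (ham : a ≤ m) (hb : b ≤ p - 2)
    (hba : a < m ∨ b = 0) :
    ∃ f : MvPolynomial (Fin m) (ZMod p), f ≠ 0 ∧ (∀ i, f.degreeOf i ≤ p - 1) ∧
      f.totalDegree = a * (p - 1) + b ∧
      p * (Finset.univ.filter
          fun v : Fin m → ZMod p => MvPolynomial.eval v f ≠ 0).card
        = (p - b) * p ^ (m - a) := by
  classical
  have hp2 : 2 ≤ p := (Fact.out : p.Prime).two_le
  have hbcard : b ≤ (Finset.univ : Finset (ZMod p)).card := by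
    simp only [Finset.card_univ, ZMod.card]
    omega
  obtain ⟨S, -, hScard⟩ := Finset.exists_subset_card_eq hbcard
  set F : Fin m → MvPolynomial (Fin m) (ZMod p) := fun i =>
    if (i : ℕ) < a then 1 - X i ^ (p - 1)
    else if (i : ℕ) = a then ∏ c ∈ S, (X i - C c) else 1 with hF
  -- per-factor facts
  have hfact1 : ∀ i : Fin m, (i : ℕ) < a →
      F i = 1 - X i ^ (p - 1) := fun i h => by simp [hF, h]
  have hfact2 : ∀ i : Fin m, ¬ (i : ℕ) < a → (i : ℕ) = a →
      F i = ∏ c ∈ S, (X i - C c) := fun i h h' => by simp [hF, h, h']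
  have hfact3 : ∀ i : Fin m, ¬ (i : ℕ) < a → ¬ (i : ℕ) = a →
      F i = 1 := fun i h h' => by simp [hF, h, h']
  -- nonzeroness of factors
  have hne1 : ∀ i : Fin m, (1 - X i ^ (p - 1) : MvPolynomial (Fin m) (ZMod p)) ≠ 0 := by
    intro i hc
    have := congrArg (eval (fun _ => (0 : ZMod p))) hc
    simp [zero_pow (show p - 1 ≠ 0 by omega)] at this
  have hne2 : ∀ i : Fin m, ∀ c : ZMod p,
      (X i - C c : MvPolynomial (Fin m) (ZMod p)) ≠ 0 := by
    intro i c hc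
    have := congrArg (eval (fun _ => c + 1)) hc
    simp at this
  have hneF : ∀ i : Fin m, F i ≠ 0 := by
    intro i
    by_cases h1 : (i : ℕ) < a
    · rw [hfact1 i h1]; exact hne1 i
    · by_cases h2 : (i : ℕ) = a
      · rw [hfact2 i h1 h2]
        exact (SZaux.totalDegree_prod_eq S _ fun c _ => hne2 i c).1
      · rw [hfact3 i h1 h2]; exact one_ne_zero
  -- total degrees of factors
  have hdeg1 : ∀ i : Fin m, (1 - X i ^ (p - 1) :
      MvPolynomial (Fin m) (ZMod p)).totalDegree = p - 1 := by
    intro i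
    apply le_antisymm
    · calc (1 - X i ^ (p - 1) : MvPolynomial (Fin m) (ZMod p)).totalDegree
          ≤ max (1 : MvPolynomial (Fin m) (ZMod p)).totalDegree
            (X i ^ (p - 1) : MvPolynomial (Fin m) (ZMod p)).totalDegree :=
          totalDegree_sub _ _
        _ ≤ p - 1 := by
          rw [totalDegree_one, totalDegree_X_pow]
          omega
    · have hco : coeff (Finsupp.single i (p - 1)) (1 - X i ^ (p - 1) :
          MvPolynomial (Fin m) (ZMod p)) = -1 := by
        rw [coeff_sub, X_pow_eq_monomial, coeff_monomial, if_pos rfl]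
        rw [coeff_one, if_neg]
        · ring
        · intro hc
          have := congrArg (fun s : Fin m →₀ ℕ => s i) hc
          simp at this
          omega
      have hmem : Finsupp.single i (p - 1) ∈ (1 - X i ^ (p - 1) :
          MvPolynomial (Fin m) (ZMod p)).support := by
        rw [mem_support_iff, hco]
        exact neg_ne_zero.mpr one_ne_zero
      have h := le_totalDegree hmem
      rwa [Finsupp.sum_single_index rfl] at h
  have hdeg2 : ∀ i : Fin m, (∏ c ∈ S, (X i - C c) :
      MvPolynomial (Fin m) (ZMod p)).totalDegree = b := by
    intro i
    have h1 : ∀ c : ZMod p, (X i - C c :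
        MvPolynomial (Fin m) (ZMod p)).totalDegree = 1 := by
      intro c
      apply le_antisymm
      · calc (X i - C c : MvPolynomial (Fin m) (ZMod p)).totalDegree
            ≤ max (X i : MvPolynomial (Fin m) (ZMod p)).totalDegree
              (C c : MvPolynomial (Fin m) (ZMod p)).totalDegree :=
            totalDegree_sub _ _
          _ ≤ 1 := by rw [totalDegree_X, totalDegree_C]; omega
      · have hco : coeff (Finsupp.single i 1) (X i - C c :
            MvPolynomial (Fin m) (ZMod p)) = 1 := by
          rw [coeff_sub, coeff_X, if_pos rfl, coeff_C, if_neg, sub_zero]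
          intro hc
          have := congrArg (fun s : Fin m →₀ ℕ => s i) hc
          simp at this
        have hmem : Finsupp.single i 1 ∈ (X i - C c :
            MvPolynomial (Fin m) (ZMod p)).support := by
          rw [mem_support_iff, hco]; exact one_ne_zero
        have h := le_totalDegree hmem
        rwa [Finsupp.sum_single_index rfl] at h
    rw [(SZaux.totalDegree_prod_eq S _ fun c _ => hne2 i c).2]
    simp [h1, hScard]
  refine ⟨∏ i, F i, (SZaux.totalDegree_prod_eq Finset.univ F
    fun i _ => hneF i).1, ?_, ?_, ?_⟩
  · -- degreeOf bounds
    intro j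
    have hbound : ∀ i : Fin m, (F i).degreeOf j ≤ if i = j then p - 1 else 0 := by
      intro i
      by_cases h1 : (i : ℕ) < a
      · rw [hfact1 i h1]
        calc (1 - X i ^ (p - 1) : MvPolynomial (Fin m) (ZMod p)).degreeOf j
            ≤ max ((1 : MvPolynomial (Fin m) (ZMod p)).degreeOf j)
              ((X i ^ (p - 1) : MvPolynomial (Fin m) (ZMod p)).degreeOf j) :=
            degreeOf_sub_le _ _ _
          _ ≤ if i = j then p - 1 else 0 := by
            rw [show (1 : MvPolynomial (Fin m) (ZMod p)) = C 1 from (C_1).symm,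
              degreeOf_C, X_pow_eq_monomial, degreeOf_monomial_eq _ _ one_ne_zero]
            rcases eq_or_ne i j with rfl | hij
            · simp
            · simp [Finsupp.single_apply, hij]
      · by_cases h2 : (i : ℕ) = a
        · rw [hfact2 i h1 h2]
          calc (∏ c ∈ S, (X i - C c) :
              MvPolynomial (Fin m) (ZMod p)).degreeOf j
              ≤ ∑ c ∈ S, (X i - C c :
                MvPolynomial (Fin m) (ZMod p)).degreeOf j :=
              degreeOf_prod_le _ _ _
            _ ≤ ∑ _c ∈ S, (if i = j then 1 else 0) := by
              apply Finset.sum_le_sum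
              intro c _
              calc (X i - C c : MvPolynomial (Fin m) (ZMod p)).degreeOf j
                  ≤ max ((X i : MvPolynomial (Fin m) (ZMod p)).degreeOf j)
                    ((C c : MvPolynomial (Fin m) (ZMod p)).degreeOf j) :=
                  degreeOf_sub_le _ _ _
                _ ≤ if i = j then 1 else 0 := by
                  rw [degreeOf_C, degreeOf_X]
                  rcases eq_or_ne i j with rfl | hij
                  · simp
                  · simp [hij, Ne.symm hij]
            _ = S.card * (if i = j then 1 else 0) := by
              rw [Finset.sum_const, smul_eq_mul]
            _ ≤ if i = j then p - 1 else 0 := by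
              rcases eq_or_ne i j with rfl | hij
              · simp [hScard]; omega
              · simp [hij]
        · rw [hfact3 i h1 h2]
          rw [show (1 : MvPolynomial (Fin m) (ZMod p)) = C 1 from (C_1).symm,
            degreeOf_C]
          positivity
    calc (∏ i, F i).degreeOf j ≤ ∑ i, (F i).degreeOf j :=
        degreeOf_prod_le _ _ _
      _ ≤ ∑ i : Fin m, (if i = j then p - 1 else 0) :=
        Finset.sum_le_sum fun i _ => hbound i
      _ = p - 1 := by simp
  · -- total degree
    rw [(SZaux.totalDegree_prod_eq Finset.univ F fun i _ => hneF i).2]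
    have hdegF : ∀ i : Fin m, (F i).totalDegree
        = (if (i : ℕ) < a then p - 1 else if (i : ℕ) = a then b else 0) := by
      intro i
      by_cases h1 : (i : ℕ) < a
      · rw [hfact1 i h1, hdeg1 i, if_pos h1]
      · by_cases h2 : (i : ℕ) = a
        · rw [hfact2 i h1 h2, hdeg2 i, if_neg h1, if_pos h2]
        · rw [hfact3 i h1 h2, totalDegree_one, if_neg h1, if_neg h2]
    calc ∑ i, (F i).totalDegree
        = ∑ i : Fin m, (if (i : ℕ) < a then p - 1 else
            if (i : ℕ) = a then b else 0) := Finset.sum_congr rfl fun i _ => hdegF i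
      _ = ∑ j ∈ Finset.range m, (if j < a then p - 1 else
            if j = a then b else 0) :=
          Fin.sum_univ_eq_sum_range
            (fun j => if j < a then p - 1 else if j = a then b else 0) m
      _ = a * (p - 1) + b := by
          have hsplit : ∀ j : ℕ, (if j < a then p - 1 else if j = a then b else 0)
              = (if j < a then p - 1 else 0) + (if j = a then b else 0) := by
            intro j
            rcases lt_trichotomy j a with h | h | h
            · simp [h, Nat.ne_of_lt h]
            · simp [h]
            · simp [Nat.lt_asymm h, Nat.ne_of_gt h]
          rw [Finset.sum_congr rfl fun j _ => hsplit j, Finset.sum_add_distrib]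
          have h1 : ∑ j ∈ Finset.range m, (if j < a then p - 1 else 0)
              = a * (p - 1) := by
            rw [← Finset.sum_subset (Finset.range_subset_range.mpr ham)
              (fun x _ hx => by simp [Finset.mem_range] at hx; rw [if_neg (by omega)])]
            rw [Finset.sum_congr rfl fun j hj => if_pos (Finset.mem_range.mp hj)]
            simp [mul_comm]
          have h2 : ∑ j ∈ Finset.range m, (if j = a then b else 0)
              = if a < m then b else 0 := by
            simp [Finset.sum_ite_eq', Finset.mem_range]
          rw [h1, h2]
          rcases hba with h | h
          · rw [if_pos h]
          · subst h; simp
  · -- the count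
    set T : Fin m → Finset (ZMod p) := fun i =>
      if (i : ℕ) < a then {0} else if (i : ℕ) = a then Sᶜ else Finset.univ with hT
    have hT1 : ∀ i : Fin m, (i : ℕ) < a → T i = {0} :=
      fun i h => by simp [hT, h]
    have hT2 : ∀ i : Fin m, ¬ (i : ℕ) < a → (i : ℕ) = a → T i = Sᶜ :=
      fun i h h' => by simp [hT, h, h']
    have hT3 : ∀ i : Fin m, ¬ (i : ℕ) < a → ¬ (i : ℕ) = a → T i = Finset.univ :=
      fun i h h' => by simp [hT, h, h']
    have hchar : ∀ v : Fin m → ZMod p,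
        eval v (∏ i, F i) ≠ 0 ↔ ∀ i, v i ∈ T i := by
      intro v
      rw [map_prod, Finset.prod_ne_zero_iff]
      apply forall_congr'
      intro i
      simp only [Finset.mem_univ, true_implies]
      by_cases h1 : (i : ℕ) < a
      · rw [hfact1 i h1, hT1 i h1]
        rw [map_sub, map_pow, map_one, eval_X]
        constructor
        · intro h
          by_contra hvi
          rw [Finset.mem_singleton] at hvi
          rw [ZMod.pow_card_sub_one_eq_one hvi] at h
          simp at h
        · intro h
          rw [Finset.mem_singleton] at h
          rw [h, zero_pow (show p - 1 ≠ 0 by omega)]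
          simp
      · by_cases h2 : (i : ℕ) = a
        · rw [hfact2 i h1 h2, hT2 i h1 h2]
          rw [map_prod]
          rw [Finset.prod_ne_zero_iff]
          constructor
          · intro h
            rw [Finset.mem_compl]
            intro hvi
            have := h (v i) hvi
            simp at this
          · intro h c hc
            rw [Finset.mem_compl] at h
            simp only [map_sub, eval_X, eval_C]
            intro hvc
            apply h
            have : v i = c := by linear_combination hvc
            rwa [this]
        · rw [hfact3 i h1 h2, hT3 i h1 h2]
          simp
    have hfilter : (Finset.univ.filter
          fun v : Fin m → ZMod p => eval v (∏ i, F i) ≠ 0)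
        = Fintype.piFinset T := by
      ext v
      simp only [Finset.mem_filter, Finset.mem_univ, true_and,
        Fintype.mem_piFinset]
      exact hchar v
    rw [hfilter, Fintype.card_piFinset]
    have hTcard : ∀ i : Fin m, (T i).card
        = (if (i : ℕ) < a then 1 else if (i : ℕ) = a then p - b else p) := by
      intro i
      by_cases h1 : (i : ℕ) < a
      · rw [hT1 i h1]; simp [h1]
      · by_cases h2 : (i : ℕ) = a
        · rw [hT2 i h1 h2, if_neg h1, if_pos h2]
          rw [Finset.card_compl, hScard, ZMod.card]
        · rw [hT3 i h1 h2, if_neg h1, if_neg h2]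
          simp [ZMod.card]
    rw [Finset.prod_congr rfl fun i _ => hTcard i]
    rw [Fin.prod_univ_eq_prod_range
      (fun j => if j < a then 1 else if j = a then p - b else p) m]
    have hprodIco : ∏ j ∈ Finset.range m,
        (if j < a then 1 else if j = a then p - b else p)
        = ∏ j ∈ Finset.Ico a m, (if j < a then 1 else if j = a then p - b else p) := by
      symm
      apply Finset.prod_subset
      · intro x hx
        rw [Finset.mem_Ico] at hx
        rw [Finset.mem_range]
        exact hx.2
      · intro x hx hxn
        rw [Finset.mem_range] at hx
        rw [Finset.mem_Ico, not_and_or] at hxn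
        have : x < a := by omega
        rw [if_pos this]
    rw [hprodIco]
    rcases hba with hlt | hb0
    · rw [Finset.prod_eq_prod_Ico_succ_bot hlt]
      rw [if_neg (lt_irrefl a), if_pos rfl]
      have hrest : ∏ j ∈ Finset.Ico (a+1) m,
          (if j < a then 1 else if j = a then p - b else p) = p ^ (m - (a+1)) := by
        rw [Finset.prod_congr rfl fun j hj => ?_, Finset.prod_const, Nat.card_Ico]
        rw [Finset.mem_Ico] at hj
        rw [if_neg (by omega), if_neg (by omega)]
      rw [hrest]
      have hexp : m - a = (m - (a + 1)) + 1 := by omega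
      rw [hexp, pow_succ]
      ring
    · subst hb0
      have hIco : Finset.Ico a m = Finset.Ico a m := rfl
      rcases Nat.eq_or_lt_of_le ham with rfl | hlt
      · rw [Finset.Ico_self, Finset.prod_empty]
        simp
      · rw [Finset.prod_eq_prod_Ico_succ_bot hlt]
        rw [if_neg (lt_irrefl a), if_pos rfl]
        have hrest : ∏ j ∈ Finset.Ico (a+1) m,
            (if j < a then 1 else if j = a then p - 0 else p) = p ^ (m - (a+1)) := by
          rw [Finset.prod_congr rfl fun j hj => ?_, Finset.prod_const, Nat.card_Ico]
          rw [Finset.mem_Ico] at hj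
          rw [if_neg (by omega), if_neg (by omega)]
        rw [hrest]
        have hexp : m - a = (m - (a + 1)) + 1 := by omega
        rw [hexp, pow_succ]
        ring

/-- For `0 ≤ r ≤ m(p−1)`, writing `r = a(p−1)+b` with
`0 ≤ b ≤ p−2`, there exists a nonzero reduced polynomial `f` of total degree
exactly `r` with `p · #{v : f(v) ≠ 0} = (p−b)·p^{m−a}`.  Consequently the
minimum number of nonzero values of a nonzero reduced polynomial of total
degree at most `r` is exactly `d_RM(r,m)`, the natural number `d` satisfying
`p · d = (p−b)·p^{m−a}`. -/
theorem schwartz_zippel_tight (p m r a b : ℕ) [Fact p.Prime]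
    (hm : 1 ≤ m) (hr : r ≤ m * (p - 1))
    (hab : r = a * (p - 1) + b) (hb : b ≤ p - 2) :
    (∃ f : MvPolynomial (Fin m) (ZMod p), f ≠ 0 ∧ (∀ i, f.degreeOf i ≤ p - 1) ∧
      f.totalDegree = r ∧
      p * (Finset.univ.filter
          fun v : Fin m → ZMod p => MvPolynomial.eval v f ≠ 0).card
        = (p - b) * p ^ (m - a)) ∧
    ∃ d : ℕ, p * d = (p - b) * p ^ (m - a) ∧
      IsLeast {n : ℕ | ∃ f : MvPolynomial (Fin m) (ZMod p), f ≠ 0 ∧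
        (∀ i, f.degreeOf i ≤ p - 1) ∧ f.totalDegree ≤ r ∧
        n = (Finset.univ.filter
          fun v : Fin m → ZMod p => MvPolynomial.eval v f ≠ 0).card} d := by
  have hp2 : 2 ≤ p := (Fact.out : p.Prime).two_le
  have ham : a ≤ m := by
    have h1 : a * (p - 1) ≤ m * (p - 1) := by omega
    exact Nat.le_of_mul_le_mul_right h1 (by omega)
  have hba : a < m ∨ b = 0 := by
    rcases Nat.eq_or_lt_of_le ham with rfl | h
    · right; omega
    · left; exact h
  obtain ⟨f, hf0, hfred, hfdeg, hfcount⟩ := SZaux.exists_tight p m a b ham hb hba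
  rw [← hab] at hfdeg
  refine ⟨⟨f, hf0, hfred, hfdeg, hfcount⟩, ?_⟩
  refine ⟨(Finset.univ.filter
      fun v : Fin m → ZMod p => MvPolynomial.eval v f ≠ 0).card,
    hfcount, ⟨⟨f, hf0, hfred, le_of_eq hfdeg, rfl⟩, ?_⟩⟩
  rintro n ⟨g, hg0, hgred, hgdeg, rfl⟩
  have hkey := SZaux.key p m r a b g hr hab hb hg0 hgred hgdeg
  rw [← hfcount] at hkey
  exact Nat.le_of_mul_le_mul_left hkey (by omega)
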